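/- arXiv:1107.1345 — 2 statements merged into one kernel-verified Lean document; each statement's English description precedes it below -/
import Mathlib

section
/- Let f₁, f₂ : [−π, π] → (n×n complex matrices) be continuous functions whose values are Hermitian positive definite at every θ, and define D₁(f₁, f₂) := (1/2π) ∫_{−π}^{π} tr( f₂(θ)⁻¹ f₁(θ) + f₁(θ)⁻¹ f₂(θ) − 2I ) dθ (a real number). Then D₁(f₁, f₂) ≥ 0, and D₁(f₁, f₂) = 0 if and only if f₁(θ) = f₂(θ) for all θ ∈ [−π, π]. -/
open Matrix Set
open scoped ComplexOrder

/-- Frobenius (Hilbert–Schmidt) norm of a complex matrix. -/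
noncomputable def frob {n : ℕ} (M : Matrix (Fin n) (Fin n) ℂ) : ℝ :=
  Real.sqrt (M * Mᴴ).trace.re

/-- The (Hermitian positive definite) square root of a Hermitian positive definite
matrix, via the continuous functional calculus. -/
noncomputable def msqrt {n : ℕ} (A : Matrix (Fin n) (Fin n) ℂ) : Matrix (Fin n) (Fin n) ℂ :=
  cfc Real.sqrt A

/-- `A^{-1/2}`, the inverse of the Hermitian square root. -/
noncomputable def minvsqrt {n : ℕ} (A : Matrix (Fin n) (Fin n) ℂ) : Matrix (Fin n) (Fin n) ℂ :=
  (msqrt A)⁻¹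

/-- The unique Hermitian logarithm of a Hermitian positive definite matrix. -/
noncomputable def mlog {n : ℕ} (A : Matrix (Fin n) (Fin n) ℂ) : Matrix (Fin n) (Fin n) ℂ :=
  cfc Real.log A

/-- Real power `A^t` of a Hermitian positive definite matrix, via the functional calculus. -/
noncomputable def mpow {n : ℕ} (A : Matrix (Fin n) (Fin n) ℂ) (t : ℝ) :
    Matrix (Fin n) (Fin n) ℂ :=
  cfc (fun x : ℝ => x ^ t) A

/-- The divergence `D₁` between two matrix-valued spectral densities. -/
noncomputable def D1 {n : ℕ} (f₁ f₂ : ℝ → Matrix (Fin n) (Fin n) ℂ) : ℝ :=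
  (1 / (2 * Real.pi)) *
    ∫ θ in (-Real.pi)..Real.pi,
      ((f₂ θ)⁻¹ * f₁ θ + (f₁ θ)⁻¹ * f₂ θ - (2 : ℂ) • 1).trace.re

lemma aux_scalar {x : ℝ} (hx : 0 < x) : 0 ≤ x + x⁻¹ - 2 := by
  have h : x + x⁻¹ - 2 = (x - 1) ^ 2 / x := by field_simp; ring
  rw [h]; positivity

lemma aux_scalar_eq {x : ℝ} (hx : 0 < x) (h : x + x⁻¹ - 2 = 0) : x = 1 := by
  have h2 : (x - 1) ^ 2 / x = 0 := by
    rw [← h]; field_simp; ring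
  field_simp at h2
  nlinarith [h2]

lemma posDef_conj {n : ℕ} {A C : Matrix (Fin n) (Fin n) ℂ} (hA : A.PosDef)
    (hC : IsUnit C.det) : (Cᴴ * A * C).PosDef := by
  have hinj : Function.Injective (C.mulVec) :=
    Matrix.mulVec_injective_iff_isUnit.mpr (Matrix.isUnit_iff_isUnit_det C |>.mpr hC)
  exact hA.conjTranspose_mul_mul_same hinj

lemma posDef_trace_key {n : ℕ} {M : Matrix (Fin n) (Fin n) ℂ} (hM : M.PosDef) :
    0 ≤ (M + M⁻¹ - (2 : ℂ) • 1).trace.re ∧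
    ((M + M⁻¹ - (2 : ℂ) • 1).trace.re = 0 ↔ M = 1) := by
  set U : Matrix (Fin n) (Fin n) ℂ := (hM.1.eigenvectorUnitary : Matrix (Fin n) (Fin n) ℂ) with hU
  set μ : Fin n → ℝ := hM.1.eigenvalues with hμ
  have hμpos : ∀ i, 0 < μ i := hM.eigenvalues_pos
  set D : Matrix (Fin n) (Fin n) ℂ := diagonal (Complex.ofReal ∘ μ) with hD
  have hUstar : star U * U = 1 := Matrix.UnitaryGroup.star_mul_self _
  have hUstar' : U * star U = 1 :=
    (Matrix.mem_unitaryGroup_iff).mp (hM.1.eigenvectorUnitary).2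
  have hspec : M = U * D * star U := hM.1.spectral_theorem
  have hDinv : D⁻¹ = diagonal (fun i => ((μ i : ℂ))⁻¹) := by
    refine Matrix.inv_eq_right_inv ?_
    rw [hD, diagonal_mul_diagonal]
    have : (fun i => (Complex.ofReal ∘ μ) i * ((μ i : ℂ))⁻¹) = fun _ => (1 : ℂ) :=
      funext fun i => mul_inv_cancel₀ (by
        simp only [Function.comp_apply, ne_eq, Complex.ofReal_eq_zero]
        exact (hμpos i).ne')
    rw [this, diagonal_one]
  have hDD : D * D⁻¹ = 1 := by
    rw [hDinv, hD, diagonal_mul_diagonal]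
    have : (fun i => (Complex.ofReal ∘ μ) i * ((μ i : ℂ))⁻¹) = fun _ => (1 : ℂ) :=
      funext fun i => mul_inv_cancel₀ (by
        simp only [Function.comp_apply, ne_eq, Complex.ofReal_eq_zero]
        exact (hμpos i).ne')
    rw [this, diagonal_one]
  have hMinv : M⁻¹ = U * D⁻¹ * star U := by
    refine Matrix.inv_eq_right_inv ?_
    rw [hspec]
    calc U * D * star U * (U * D⁻¹ * star U)
        = U * D * (star U * U) * D⁻¹ * star U := by noncomm_ring
      _ = U * (D * D⁻¹) * star U := by rw [hUstar]; noncomm_ring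
      _ = 1 := by rw [hDD, mul_one, hUstar']
  have htrM : M.trace = ∑ i, (μ i : ℂ) := by
    rw [hspec, Matrix.trace_mul_cycle, hUstar, Matrix.one_mul, hD,
      Matrix.trace_diagonal]
    rfl
  have htrMinv : M⁻¹.trace = ∑ i, ((μ i : ℂ))⁻¹ := by
    rw [hMinv, Matrix.trace_mul_cycle, hUstar, Matrix.one_mul, hDinv,
      Matrix.trace_diagonal]
  have htr1 : ((2 : ℂ) • (1 : Matrix (Fin n) (Fin n) ℂ)).trace = (2 * n : ℂ) := by
    rw [Matrix.trace_smul, Matrix.trace_one]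
    simp [smul_eq_mul]
  have hre : (M + M⁻¹ - (2 : ℂ) • 1).trace.re = ∑ i, (μ i + (μ i)⁻¹ - 2) := by
    rw [Matrix.trace_sub, Matrix.trace_add, htrM, htrMinv, htr1]
    have : (∑ i, (μ i : ℂ)) + (∑ i, ((μ i : ℂ))⁻¹) - (2 * n : ℂ)
        = ((∑ i, (μ i + (μ i)⁻¹ - 2) : ℝ) : ℂ) := by
      push_cast
      rw [Finset.sum_sub_distrib, Finset.sum_add_distrib]
      simp [Finset.sum_const, Finset.card_univ, mul_comm]
    rw [this, Complex.ofReal_re]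
  constructor
  · rw [hre]
    exact Finset.sum_nonneg fun i _ => aux_scalar (hμpos i)
  · constructor
    · intro h0
      rw [hre] at h0
      have hall := (Finset.sum_eq_zero_iff_of_nonneg
        (fun i _ => aux_scalar (hμpos i))).mp h0
      have hDone : D = 1 := by
        rw [hD]
        have : Complex.ofReal ∘ μ = fun _ => (1 : ℂ) := funext fun i => by
          have := aux_scalar_eq (hμpos i) (hall i (Finset.mem_univ i))
          simp [this]
        rw [this, diagonal_one]
      rw [hspec, hDone, Matrix.mul_one, hUstar']
    · intro h1
      rw [hre]
      have : ∀ i, μ i = 1 := by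
        intro i
        have : D = 1 := by
          have : star U * M * U = D := by
            rw [hspec]
            calc star U * (U * D * star U) * U = (star U * U) * D * (star U * U) := by noncomm_ring
              _ = D := by rw [hUstar, Matrix.one_mul, Matrix.mul_one]
          rw [h1, Matrix.mul_one, hUstar] at this
          exact this.symm
        have h2 : ((μ i : ℂ)) = 1 := by
          have h3 := congrFun (congrFun this i) i
          rw [hD] at h3
          simpa [Matrix.diagonal_apply_eq, Matrix.one_apply_eq] using h3
        exact_mod_cast h2
      exact Finset.sum_eq_zero fun i _ => by rw [this i]; norm_num

open scoped MatrixOrder in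
lemma key_pointwise {n : ℕ} {A B : Matrix (Fin n) (Fin n) ℂ} (hA : A.PosDef) (hB : B.PosDef) :
    0 ≤ (B⁻¹ * A + A⁻¹ * B - (2 : ℂ) • 1).trace.re ∧
    ((B⁻¹ * A + A⁻¹ * B - (2 : ℂ) • 1).trace.re = 0 ↔ A = B) := by
  set S : Matrix (Fin n) (Fin n) ℂ := CFC.sqrt B with hS
  have hSS : S * S = B := CFC.sqrt_mul_sqrt_self B hB.posSemidef.nonneg
  have hSherm : S.IsHermitian := (CFC.sqrt_nonneg B).posSemidef.1
  clear_value S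
  have hdetS : S.det ≠ 0 := by
    intro h
    have : B.det = 0 := by rw [← hSS, Matrix.det_mul, h, mul_zero]
    exact hB.det_pos.ne' this
  have hdetA : A.det ≠ 0 := hA.det_pos.ne'
  have hdetSu : IsUnit S.det := isUnit_iff_ne_zero.mpr hdetS
  have hdetAu : IsUnit A.det := isUnit_iff_ne_zero.mpr hdetA
  have hSinv : S⁻¹ * S = 1 := Matrix.nonsing_inv_mul S hdetSu
  have hSinv' : S * S⁻¹ = 1 := Matrix.mul_nonsing_inv S hdetSu
  have hSinvherm : (S⁻¹).IsHermitian := hSherm.inv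
  set M : Matrix (Fin n) (Fin n) ℂ := S⁻¹ * A * S⁻¹ with hMdef
  have hM : M.PosDef := by
    have hdetSinv : IsUnit (S⁻¹).det := isUnit_iff_ne_zero.mpr (by
      rw [Matrix.det_nonsing_inv, Ring.inverse_eq_inv']
      exact inv_ne_zero hdetS)
    have := posDef_conj hA hdetSinv
    rwa [hSinvherm.eq] at this
  have hMinv : M⁻¹ = S * A⁻¹ * S := by
    refine Matrix.inv_eq_right_inv ?_
    calc S⁻¹ * A * S⁻¹ * (S * A⁻¹ * S)
        = S⁻¹ * A * (S⁻¹ * S) * A⁻¹ * S := by noncomm_ring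
      _ = S⁻¹ * (A * A⁻¹) * S := by rw [hSinv]; noncomm_ring
      _ = 1 := by rw [Matrix.mul_nonsing_inv A hdetAu, Matrix.mul_one, hSinv]
  have t1 : (B⁻¹ * A).trace = M.trace := by
    rw [← hSS, Matrix.mul_inv_rev, hMdef]
    exact (Matrix.trace_mul_cycle S⁻¹ A S⁻¹).symm
  have t2 : (A⁻¹ * B).trace = M⁻¹.trace := by
    rw [hMinv, ← hSS]
    calc (A⁻¹ * (S * S)).trace = (A⁻¹ * S * S).trace := by rw [Matrix.mul_assoc]
      _ = (S * A⁻¹ * S).trace := Matrix.trace_mul_cycle A⁻¹ S S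
  have hsplit : (B⁻¹ * A + A⁻¹ * B - (2 : ℂ) • 1).trace
      = (M + M⁻¹ - (2 : ℂ) • 1).trace := by
    rw [Matrix.trace_sub, Matrix.trace_sub, Matrix.trace_add, Matrix.trace_add, t1, t2]
  have hkey := posDef_trace_key hM
  rw [hsplit]
  refine ⟨hkey.1, hkey.2.trans ?_⟩
  constructor
  · intro hM1
    rw [hMdef] at hM1
    have e1 : S * (S⁻¹ * A * S⁻¹) * S = A := by
      calc S * (S⁻¹ * A * S⁻¹) * S = (S * S⁻¹) * A * (S⁻¹ * S) := by noncomm_ring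
        _ = A := by rw [hSinv', hSinv, Matrix.one_mul, Matrix.mul_one]
    calc A = S * (S⁻¹ * A * S⁻¹) * S := e1.symm
      _ = S * 1 * S := by rw [hM1]
      _ = B := by rw [Matrix.mul_one, hSS]
  · intro hAB
    rw [hMdef, hAB, ← hSS]
    calc S⁻¹ * (S * S) * S⁻¹ = (S⁻¹ * S) * (S * S⁻¹) := by noncomm_ring
      _ = 1 := by rw [hSinv, hSinv', Matrix.one_mul]

lemma eq_zero_of_integral_zero {g : ℝ → ℝ} {p q : ℝ} (hpq : p < q)
    (hgc : ContinuousOn g (Icc p q)) (hg0 : ∀ θ ∈ Icc p q, 0 ≤ g θ)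
    (hI : (∫ θ in p..q, g θ) = 0) : ∀ θ ∈ Icc p q, g θ = 0 := by
  intro θ₀ hθ₀
  by_contra hne
  have hε : 0 < g θ₀ := lt_of_le_of_ne (hg0 θ₀ hθ₀) (Ne.symm hne)
  set ε := g θ₀ with hεdef
  have hgi : IntervalIntegrable g MeasureTheory.volume p q := by
    apply ContinuousOn.intervalIntegrable
    rwa [uIcc_of_le hpq.le]
  obtain ⟨δ, hδ, hball⟩ := Metric.continuousWithinAt_iff.mp (hgc θ₀ hθ₀) (ε / 2) (by positivity)
  set a := max p (θ₀ - δ / 2) with ha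
  set b := min q (θ₀ + δ / 2) with hb
  have hpa : p ≤ a := le_max_left _ _
  have hbq : b ≤ q := min_le_left _ _
  have hab : a < b := by
    rcases hθ₀ with ⟨h1, h2⟩
    apply max_lt <;> apply lt_min <;> linarith
  have hsub : Icc a b ⊆ Icc p q := Icc_subset_Icc hpa hbq
  have hlow : ∀ θ ∈ Icc a b, ε / 2 ≤ g θ := by
    intro θ hθ
    have hθmem : θ ∈ Icc p q := hsub hθ
    have hdist : dist θ θ₀ < δ := by
      rw [Real.dist_eq, abs_lt]
      rcases hθ with ⟨h1, h2⟩
      have := le_max_right p (θ₀ - δ / 2)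
      have := min_le_right q (θ₀ + δ / 2)
      constructor <;> linarith
    have := hball hθmem hdist
    rw [Real.dist_eq, abs_lt] at this
    linarith [this.1]
  have hi1 : IntervalIntegrable g MeasureTheory.volume p a :=
    hgi.mono_set (by rw [uIcc_of_le hpa, uIcc_of_le hpq.le]; exact Icc_subset_Icc le_rfl (hab.le.trans hbq))
  have hi2 : IntervalIntegrable g MeasureTheory.volume a b :=
    hgi.mono_set (by rw [uIcc_of_le hab.le, uIcc_of_le hpq.le]; exact Icc_subset_Icc hpa hbq)
  have hi3 : IntervalIntegrable g MeasureTheory.volume b q :=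
    hgi.mono_set (by rw [uIcc_of_le hbq, uIcc_of_le hpq.le]; exact Icc_subset_Icc (hpa.trans hab.le) le_rfl)
  have hsplit : (∫ θ in p..q, g θ)
      = (∫ θ in p..a, g θ) + (∫ θ in a..b, g θ) + (∫ θ in b..q, g θ) := by
    rw [intervalIntegral.integral_add_adjacent_intervals hi1 hi2,
      intervalIntegral.integral_add_adjacent_intervals (hi1.trans hi2) hi3]
  have h1 : 0 ≤ ∫ θ in p..a, g θ :=
    intervalIntegral.integral_nonneg hpa
      (fun u hu => hg0 u (Icc_subset_Icc le_rfl (hab.le.trans hbq) hu))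
  have h3 : 0 ≤ ∫ θ in b..q, g θ :=
    intervalIntegral.integral_nonneg hbq
      (fun u hu => hg0 u (Icc_subset_Icc (hpa.trans hab.le) le_rfl hu))
  have h2 : (b - a) * (ε / 2) ≤ ∫ θ in a..b, g θ := by
    have := intervalIntegral.integral_mono_on hab.le (intervalIntegrable_const (c := ε / 2))
      hi2 hlow
    rwa [intervalIntegral.integral_const, smul_eq_mul] at this
  have : 0 < (∫ θ in p..q, g θ) := by
    rw [hsplit]
    have : 0 < (b - a) * (ε / 2) := by
      apply mul_pos (by linarith) (by positivity)
    linarith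
  linarith [hI ▸ this]

lemma g_continuousOn {n : ℕ} (f₁ f₂ : ℝ → Matrix (Fin n) (Fin n) ℂ)
    (hc₁ : ContinuousOn f₁ (Set.Icc (-Real.pi) Real.pi))
    (hc₂ : ContinuousOn f₂ (Set.Icc (-Real.pi) Real.pi))
    (hp₁ : ∀ θ ∈ Set.Icc (-Real.pi) Real.pi, (f₁ θ).PosDef)
    (hp₂ : ∀ θ ∈ Set.Icc (-Real.pi) Real.pi, (f₂ θ).PosDef) :
    ContinuousOn (fun θ => ((f₂ θ)⁻¹ * f₁ θ + (f₁ θ)⁻¹ * f₂ θ - (2 : ℂ) • 1).trace.re)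
      (Set.Icc (-Real.pi) Real.pi) := by
  set s := Set.Icc (-Real.pi) Real.pi
  have hmul : ∀ {X Y : ℝ → Matrix (Fin n) (Fin n) ℂ}, ContinuousOn X s → ContinuousOn Y s →
      ContinuousOn (fun θ => X θ * Y θ) s := fun hX hY =>
    hX.mul hY
  have hinv : ∀ {X : ℝ → Matrix (Fin n) (Fin n) ℂ}, ContinuousOn X s →
      (∀ θ ∈ s, (X θ).PosDef) → ContinuousOn (fun θ => (X θ)⁻¹) s := by
    intro X hX hpd
    have heq : (fun θ => (X θ)⁻¹) = fun θ => ((X θ).det)⁻¹ • (X θ).adjugate := by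
      funext θ
      rw [Matrix.inv_def, Ring.inverse_eq_inv']
    rw [heq]
    have hdet : ContinuousOn (fun θ => (X θ).det) s :=
      (continuous_id.matrix_det).comp_continuousOn hX
    have hadj : ContinuousOn (fun θ => (X θ).adjugate) s :=
      (continuous_id.matrix_adjugate).comp_continuousOn hX
    exact (hdet.inv₀ (fun θ hθ => (hpd θ hθ).det_pos.ne')).smul hadj
  have hmatexpr : ContinuousOn
      (fun θ => (f₂ θ)⁻¹ * f₁ θ + (f₁ θ)⁻¹ * f₂ θ - (2 : ℂ) • 1) s :=
    (((hmul (hinv hc₂ hp₂) hc₁).add (hmul (hinv hc₁ hp₁) hc₂)).sub continuousOn_const)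
  exact Complex.continuous_re.comp_continuousOn
    ((continuous_id.matrix_trace).comp_continuousOn hmatexpr)

theorem D1_nonneg_and_eq_zero_iff {n : ℕ} (f₁ f₂ : ℝ → Matrix (Fin n) (Fin n) ℂ)
    (hc₁ : ContinuousOn f₁ (Set.Icc (-Real.pi) Real.pi))
    (hc₂ : ContinuousOn f₂ (Set.Icc (-Real.pi) Real.pi))
    (hp₁ : ∀ θ ∈ Set.Icc (-Real.pi) Real.pi, (f₁ θ).PosDef)
    (hp₂ : ∀ θ ∈ Set.Icc (-Real.pi) Real.pi, (f₂ θ).PosDef) :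
    0 ≤ D1 f₁ f₂ ∧
    (D1 f₁ f₂ = 0 ↔ ∀ θ ∈ Set.Icc (-Real.pi) Real.pi, f₁ θ = f₂ θ) := by
  have hpi : (0 : ℝ) < Real.pi := Real.pi_pos
  have hle : -Real.pi ≤ Real.pi := by linarith
  set g : ℝ → ℝ :=
    fun θ => ((f₂ θ)⁻¹ * f₁ θ + (f₁ θ)⁻¹ * f₂ θ - (2 : ℂ) • 1).trace.re with hg
  have hgc : ContinuousOn g (Set.Icc (-Real.pi) Real.pi) :=
    g_continuousOn f₁ f₂ hc₁ hc₂ hp₁ hp₂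
  have hg0 : ∀ θ ∈ Set.Icc (-Real.pi) Real.pi, 0 ≤ g θ :=
    fun θ hθ => (key_pointwise (hp₁ θ hθ) (hp₂ θ hθ)).1
  have hD1 : D1 f₁ f₂ = (1 / (2 * Real.pi)) * ∫ θ in (-Real.pi)..Real.pi, g θ := rfl
  have hInonneg : 0 ≤ ∫ θ in (-Real.pi)..Real.pi, g θ :=
    intervalIntegral.integral_nonneg hle hg0
  have hcpos : 0 < 1 / (2 * Real.pi) := by positivity
  constructor
  · rw [hD1]
    exact mul_nonneg hcpos.le hInonneg
  · rw [hD1]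
    constructor
    · intro h0
      have hI0 : (∫ θ in (-Real.pi)..Real.pi, g θ) = 0 := by
        rcases mul_eq_zero.mp h0 with h | h
        · exact absurd h hcpos.ne'
        · exact h
      have hgz := eq_zero_of_integral_zero (by linarith) hgc hg0 hI0
      intro θ hθ
      exact (key_pointwise (hp₁ θ hθ) (hp₂ θ hθ)).2.mp (hgz θ hθ)
    · intro heq
      have hgz : Set.EqOn g 0 (Set.uIcc (-Real.pi) Real.pi) := by
        rw [uIcc_of_le hle]
        intro θ hθ
        exact (key_pointwise (hp₁ θ hθ) (hp₂ θ hθ)).2.mpr (heq θ hθ)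
      rw [intervalIntegral.integral_congr hgz]
      simp
end

section
/- Let f, Δ : [−π, π] → (n×n complex matrices) be continuous, with f(θ) Hermitian positive definite and Δ(θ) Hermitian for every θ. Define D₁(f, h) := (1/2π) ∫_{−π}^{π} tr( h⁻¹ f + f⁻¹ h − 2I ) dθ and g₁,f(Δ) := (1/2π) ∫_{−π}^{π} ‖f(θ)^{-1/2} Δ(θ) f(θ)^{-1/2}‖_Fr² dθ. Then there exist constants C > 0 and ε₀ > 0 such that for all 0 < ε < ε₀, f + εΔ is pointwise Hermitian positive definite and | D₁(f, f + εΔ) − ε² g₁,f(Δ) | ≤ C ε³. -/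
open Matrix Set
open scoped ComplexOrder

set_option maxHeartbeats 1000000

section Aux
variable {n : ℕ}

lemma msqrt_mul_self {A : Matrix (Fin n) (Fin n) ℂ} (hA : A.PosDef) :
    msqrt A * msqrt A = A := by
  have hsa : IsSelfAdjoint A := hA.1.isSelfAdjoint
  rw [msqrt, ← cfc_mul Real.sqrt Real.sqrt A]
  have h1 : (spectrum ℝ A).EqOn (fun x => Real.sqrt x * Real.sqrt x) id := by
    intro x hx
    rw [hA.1.spectrum_real_eq_range_eigenvalues] at hx
    obtain ⟨i, rfl⟩ := hx
    exact Real.mul_self_sqrt (hA.eigenvalues_pos i).le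
  rw [cfc_congr h1, cfc_id ℝ A]

lemma msqrt_isHermitian {A : Matrix (Fin n) (Fin n) ℂ} (hA : A.PosDef) :
    (msqrt A).IsHermitian := by
  have : IsSelfAdjoint (cfc Real.sqrt A) := cfc_predicate _ _
  exact this

lemma key_trace {A E : Matrix (Fin n) (Fin n) ℂ} (hA : IsUnit A.det)
    (hAE : IsUnit (A + E).det) :
    ((A + E)⁻¹ * A + A⁻¹ * (A + E) - (2 : ℂ) • 1).trace
      = (A⁻¹ * E * (A⁻¹ * E)).trace - (A⁻¹ * E * (A⁻¹ * E) * ((A + E)⁻¹ * E)).trace := by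
  set B := (A + E)⁻¹ with hBdef
  have h2 : A⁻¹ * A = 1 := nonsing_inv_mul A hA
  have hB : B * (A + E) = 1 := nonsing_inv_mul _ hAE
  have hB' : (A + E) * B = 1 := mul_nonsing_inv _ hAE
  have hBA : B * A = 1 - B * E := by
    rw [mul_add] at hB; linear_combination (norm := noncomm_ring) hB
  have hres : B = A⁻¹ - A⁻¹ * E * B := by
    have := congrArg (fun M => A⁻¹ * M) hB'
    simp only [add_mul, mul_add, mul_one] at this
    rw [← mul_assoc, h2, one_mul] at this
    linear_combination (norm := noncomm_ring) this
  have step1 : ((A + E)⁻¹ * A + A⁻¹ * (A + E) - (2 : ℂ) • 1).trace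
      = (A⁻¹ * E).trace - (B * E).trace := by
    rw [← hBdef, hBA, mul_add, h2]
    rw [show (1 - B * E + (1 + A⁻¹ * E) - (2:ℂ) • 1)
        = A⁻¹ * E - B * E + ((1 : Matrix (Fin n) (Fin n) ℂ) + 1 - (2:ℂ) • 1) by abel,
      show ((1 : Matrix (Fin n) (Fin n) ℂ) + 1 - (2:ℂ) • 1) = 0 by
        rw [two_smul]; abel]
    rw [add_zero, trace_sub]
  rw [step1]
  have step2 : (A⁻¹ * E).trace - (B * E).trace = (A⁻¹ * E * (B * E)).trace := by
    rw [← trace_sub, ← sub_mul, show A⁻¹ - B = A⁻¹ * E * B by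
      conv_lhs => rw [hres]
      rw [sub_sub_cancel], mul_assoc]
  rw [step2]
  conv_lhs => rw [hres]
  rw [show A⁻¹ * E * ((A⁻¹ - A⁻¹ * E * B) * E)
      = A⁻¹ * E * (A⁻¹ * E) - A⁻¹ * E * (A⁻¹ * E) * (B * E) by noncomm_ring]
  rw [trace_sub]

lemma pointwise_expand {A Δm : Matrix (Fin n) (Fin n) ℂ} (ε : ℝ) (hA : IsUnit A.det)
    (hAE : IsUnit (A + (ε:ℂ) • Δm).det) :
    ((A + (ε:ℂ) • Δm)⁻¹ * A + A⁻¹ * (A + (ε:ℂ) • Δm) - (2:ℂ) • 1).trace.re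
      = ε^2 * (A⁻¹ * Δm * (A⁻¹ * Δm)).trace.re
        - ε^3 * (A⁻¹ * Δm * (A⁻¹ * Δm) * ((A + (ε:ℂ) • Δm)⁻¹ * Δm)).trace.re := by
  have hkey := congrArg Complex.re (key_trace (E := (ε:ℂ) • Δm) hA hAE)
  have e1 : A⁻¹ * ((ε:ℂ) • Δm) * (A⁻¹ * ((ε:ℂ) • Δm))
      = ((ε:ℂ)^2) • (A⁻¹ * Δm * (A⁻¹ * Δm)) := by
    simp only [mul_smul_comm, smul_mul_assoc, smul_smul]
    rw [sq]
  have e2 : A⁻¹ * ((ε:ℂ) • Δm) * (A⁻¹ * ((ε:ℂ) • Δm)) * ((A + (ε:ℂ) • Δm)⁻¹ * ((ε:ℂ) • Δm))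
      = ((ε:ℂ)^3) • (A⁻¹ * Δm * (A⁻¹ * Δm) * ((A + (ε:ℂ) • Δm)⁻¹ * Δm)) := by
    rw [e1]
    simp only [mul_smul_comm, smul_mul_assoc, smul_smul]
    ring_nf
  rw [e2, e1, trace_smul, trace_smul] at hkey
  rw [hkey]
  simp only [smul_eq_mul, Complex.sub_re, ← Complex.ofReal_pow, Complex.re_ofReal_mul]

lemma msqrt_isUnit {A : Matrix (Fin n) (Fin n) ℂ} (hA : A.PosDef) :
    IsUnit (msqrt A) := by
  have h := hA.isUnit
  rw [← msqrt_mul_self hA, Matrix.isUnit_iff_isUnit_det, det_mul] at h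
  rw [Matrix.isUnit_iff_isUnit_det]
  exact isUnit_of_mul_isUnit_left h

lemma trace_mul_conjTranspose_re_nonneg (M : Matrix (Fin n) (Fin n) ℂ) :
    0 ≤ (M * Mᴴ).trace.re := by
  rw [Matrix.trace]
  simp only [Matrix.diag, Matrix.mul_apply, Matrix.conjTranspose_apply]
  rw [Complex.re_sum]
  refine Finset.sum_nonneg fun i _ => ?_
  rw [Complex.re_sum]
  refine Finset.sum_nonneg fun j _ => ?_
  rw [show star (M i j) = (starRingEnd ℂ) (M i j) from rfl, Complex.mul_conj,
    Complex.ofReal_re]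
  exact Complex.normSq_nonneg _

lemma frob_sq_of_hermitian {M : Matrix (Fin n) (Fin n) ℂ} (hM : M.IsHermitian) :
    frob M ^ 2 = (M * M).trace.re := by
  rw [frob, Real.sq_sqrt (trace_mul_conjTranspose_re_nonneg M), hM.eq]

lemma minvsqrt_mul_self {A : Matrix (Fin n) (Fin n) ℂ} (hA : A.PosDef) :
    minvsqrt A * minvsqrt A = A⁻¹ := by
  rw [minvsqrt, ← Matrix.mul_inv_rev, msqrt_mul_self hA]

lemma g_integrand_eq {A Δ : Matrix (Fin n) (Fin n) ℂ} (hA : A.PosDef) (hΔ : Δ.IsHermitian) :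
    frob (minvsqrt A * Δ * minvsqrt A) ^ 2 = (A⁻¹ * Δ * (A⁻¹ * Δ)).trace.re := by
  set Q := minvsqrt A with hQdef
  have hQ : Q.IsHermitian := (msqrt_isHermitian hA).inv
  have hS : (Q * Δ * Q).IsHermitian := by
    have h := Matrix.isHermitian_mul_mul_conjTranspose Q hΔ
    rwa [hQ.eq] at h
  have hQQ : Q * Q = A⁻¹ := minvsqrt_mul_self hA
  rw [frob_sq_of_hermitian hS]
  congr 1
  calc (Q * Δ * Q * (Q * Δ * Q)).trace
      = ((Q * Δ) * (A⁻¹ * (Δ * Q))).trace := by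
        rw [show Q * Δ * Q * (Q * Δ * Q) = (Q * Δ) * ((Q * Q) * (Δ * Q)) by noncomm_ring, hQQ]
    _ = ((A⁻¹ * (Δ * Q)) * (Q * Δ)).trace := trace_mul_comm _ _
    _ = (A⁻¹ * Δ * (A⁻¹ * Δ)).trace := by
        rw [show (A⁻¹ * (Δ * Q)) * (Q * Δ) = A⁻¹ * Δ * ((Q * Q) * Δ) by noncomm_ring, hQQ]

lemma hermitian_smul_real {Δ : Matrix (Fin n) (Fin n) ℂ} (hΔ : Δ.IsHermitian) (ε : ℝ) :
    ((ε : ℂ) • Δ).IsHermitian := by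
  unfold Matrix.IsHermitian
  rw [conjTranspose_smul, hΔ.eq]
  congr 1
  simp [Complex.star_def, Complex.conj_ofReal]

lemma posdef_of_re {M : Matrix (Fin n) (Fin n) ℂ} (hH : M.IsHermitian)
    (h : ∀ x : Fin n → ℂ, x ≠ 0 → 0 < (star x ⬝ᵥ M *ᵥ x).re) : M.PosDef := by
  rw [posDef_iff_dotProduct_mulVec]
  refine ⟨hH, fun x hx => ?_⟩
  rw [Complex.lt_def]
  refine ⟨by simpa using h x hx, ?_⟩
  have hst : star (star x ⬝ᵥ M *ᵥ x) = star x ⬝ᵥ M *ᵥ x := by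
    rw [← star_dotProduct, star_mulVec, hH.eq, dotProduct_mulVec]
  have := congrArg Complex.im hst
  simp only [Complex.star_def, Complex.conj_im, Complex.zero_im] at this ⊢
  linarith

lemma quad_smul (M : Matrix (Fin n) (Fin n) ℂ) (c : ℂ) (x : Fin n → ℂ) :
    star (c • x) ⬝ᵥ M *ᵥ (c • x) = (star c * c) • (star x ⬝ᵥ M *ᵥ x) := by
  rw [star_smul, smul_dotProduct, mulVec_smul, dotProduct_smul, smul_smul]

lemma cont_quad :
    Continuous (fun p : Matrix (Fin n) (Fin n) ℂ × (Fin n → ℂ) => star p.2 ⬝ᵥ p.1 *ᵥ p.2) :=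
  Continuous.dotProduct (continuous_star.comp continuous_snd)
    (continuous_fst.matrix_mulVec continuous_snd)

lemma continuousOn_matrix_inv {α : Type*} [TopologicalSpace α] {s : Set α}
    {g : α → Matrix (Fin n) (Fin n) ℂ} (hg : ContinuousOn g s)
    (h : ∀ p ∈ s, IsUnit (g p).det) :
    ContinuousOn (fun p => (g p)⁻¹) s := by
  have heq : ∀ p ∈ s, ((g p).det)⁻¹ • (g p).adjugate = (g p)⁻¹ := fun p hp => by
    rw [Matrix.inv_def, Ring.inverse_eq_inv']
  refine ContinuousOn.congr ?_ fun p hp => (heq p hp).symm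
  have hdet : ContinuousOn (fun p => (g p).det) s :=
    (continuous_id.matrix_det).comp_continuousOn hg
  have hadj : ContinuousOn (fun p => (g p).adjugate) s :=
    (continuous_id.matrix_adjugate).comp_continuousOn hg
  exact (hdet.inv₀ fun p hp => (h p hp).ne_zero).smul hadj

lemma exists_eps_posdef (f Δ : ℝ → Matrix (Fin n) (Fin n) ℂ)
    (hcf : ContinuousOn f (Set.Icc (-Real.pi) Real.pi))
    (hcΔ : ContinuousOn Δ (Set.Icc (-Real.pi) Real.pi))
    (hpf : ∀ θ ∈ Set.Icc (-Real.pi) Real.pi, (f θ).PosDef)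
    (hΔ : ∀ θ ∈ Set.Icc (-Real.pi) Real.pi, (Δ θ).IsHermitian) :
    ∃ ε₁ > (0:ℝ), ∀ ε ∈ Set.Icc (0:ℝ) ε₁, ∀ θ ∈ Set.Icc (-Real.pi) Real.pi,
      (f θ + (ε : ℂ) • Δ θ).PosDef := by
  rcases Nat.eq_zero_or_pos n with hn | hn
  · subst hn
    refine ⟨1, one_pos, fun ε _ θ _ => ?_⟩
    exact ⟨Subsingleton.elim _ _, fun x hx => absurd (Subsingleton.elim x 0) hx⟩
  · haveI : Inhabited (Fin n) := ⟨⟨0, hn⟩⟩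
    haveI : Nontrivial (Fin n → ℂ) := Pi.nontrivial
    set Kθ := Set.Icc (-Real.pi) Real.pi with hKθ
    set K : Set (ℝ × (Fin n → ℂ)) := Kθ ×ˢ Metric.sphere (0 : Fin n → ℂ) 1 with hK
    have hKc : IsCompact K := isCompact_Icc.prod (isCompact_sphere _ _)
    have hπ : (0:ℝ) < Real.pi := Real.pi_pos
    obtain ⟨x₀, hx₀⟩ :=
      (NormedSpace.sphere_nonempty (E := Fin n → ℂ) (x := 0) (r := 1)).mpr zero_le_one
    have hmemθ : -Real.pi ∈ Kθ := Set.mem_Icc.mpr ⟨le_rfl, by linarith⟩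
    have hKne : K.Nonempty := ⟨(-Real.pi, x₀), Set.mem_prod.mpr ⟨hmemθ, hx₀⟩⟩
    have hpair : ∀ (g : ℝ → Matrix (Fin n) (Fin n) ℂ), ContinuousOn g Kθ →
        ContinuousOn (fun p : ℝ × (Fin n → ℂ) => (star p.2 ⬝ᵥ g p.1 *ᵥ p.2)) K := by
      intro g hg
      exact cont_quad.comp_continuousOn
        (((hg.comp continuous_fst.continuousOn (fun p hp => hp.1)).prodMk
          continuous_snd.continuousOn))
    obtain ⟨p₀, hp₀K, hmin⟩ := hKc.exists_isMinOn hKne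
      (Complex.continuous_re.comp_continuousOn (hpair f hcf))
    set m : ℝ := (star p₀.2 ⬝ᵥ f p₀.1 *ᵥ p₀.2).re with hm
    have hp₀x : p₀.2 ≠ 0 := by
      have := hp₀K.2
      simp only [Metric.mem_sphere, dist_zero_right] at this
      intro h; rw [h] at this; simp at this
    have hmpos : 0 < m := (hpf p₀.1 hp₀K.1).re_dotProduct_pos hp₀x
    obtain ⟨M, hM⟩ := hKc.exists_bound_of_continuousOn (hpair Δ hcΔ)
    have hM0 : 0 ≤ M := le_trans (norm_nonneg _) (hM p₀ hp₀K)
    refine ⟨m / (2 * (M + 1)), by positivity, fun ε hε θ hθ => ?_⟩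
    refine posdef_of_re ((hpf θ hθ).1.add (hermitian_smul_real (hΔ θ hθ) ε)) fun x hx => ?_
    set c : ℂ := (‖x‖ : ℂ) with hc
    have hxn : (0:ℝ) < ‖x‖ := norm_pos_iff.mpr hx
    set u : Fin n → ℂ := c⁻¹ • x with hu
    have hcne : c ≠ 0 := by
      simp only [hc, ne_eq, Complex.ofReal_eq_zero]; exact ne_of_gt hxn
    have hxu : x = c • u := by rw [hu, smul_smul, mul_inv_cancel₀ hcne, one_smul]
    have hun : ‖u‖ = 1 := by
      rw [hu, norm_smul, norm_inv, hc, Complex.norm_real, Real.norm_eq_abs,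
        abs_of_pos hxn, inv_mul_cancel₀ (ne_of_gt hxn)]
    have hmem : (θ, u) ∈ K := ⟨hθ, by simpa [Metric.mem_sphere, dist_zero_right] using hun⟩
    have hf_lb : m ≤ (star u ⬝ᵥ f θ *ᵥ u).re := hmin hmem
    have hΔ_ub : |(star u ⬝ᵥ Δ θ *ᵥ u).re| ≤ M :=
      le_trans (Complex.abs_re_le_norm _) (hM (θ, u) hmem)
    have hquad : star x ⬝ᵥ (f θ + (ε : ℂ) • Δ θ) *ᵥ x
        = (star c * c) • (star u ⬝ᵥ (f θ + (ε : ℂ) • Δ θ) *ᵥ u) := by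
      rw [hxu, quad_smul]
    have hsplit : (star u ⬝ᵥ (f θ + (ε : ℂ) • Δ θ) *ᵥ u).re
        = (star u ⬝ᵥ f θ *ᵥ u).re + ε * (star u ⬝ᵥ Δ θ *ᵥ u).re := by
      rw [add_mulVec, dotProduct_add, smul_mulVec, dotProduct_smul, Complex.add_re,
        smul_eq_mul, Complex.re_ofReal_mul]
    have hstarc : star c * c = ((‖x‖^2 : ℝ) : ℂ) := by
      rw [hc, Complex.star_def, Complex.conj_ofReal, ← Complex.ofReal_mul, sq]
    have hupos : 0 < (star u ⬝ᵥ (f θ + (ε : ℂ) • Δ θ) *ᵥ u).re := by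
      rw [hsplit]
      have h1 : ε * (star u ⬝ᵥ Δ θ *ᵥ u).re ≥ -(ε * M) := by
        have := abs_le.mp hΔ_ub
        nlinarith [hε.1]
      have h2 : ε * M ≤ (m / (2 * (M + 1))) * M :=
        mul_le_mul_of_nonneg_right hε.2 hM0
      have h3 : (m / (2 * (M + 1))) * M < m := by
        rw [div_mul_eq_mul_div, div_lt_iff₀ (by positivity)]
        nlinarith
      linarith
    rw [hquad, hstarc]
    have h4 : ((‖x‖^2:ℝ):ℂ) • (star u ⬝ᵥ (f θ + (ε : ℂ) • Δ θ) *ᵥ u)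
        = ((‖x‖^2:ℝ):ℂ) * (star u ⬝ᵥ (f θ + (ε : ℂ) • Δ θ) *ᵥ u) := smul_eq_mul ..
    rw [h4, Complex.re_ofReal_mul]
    positivity

end Aux

theorem D1_second_order_expansion {n : ℕ} (f Δ : ℝ → Matrix (Fin n) (Fin n) ℂ)
    (hcf : ContinuousOn f (Set.Icc (-Real.pi) Real.pi))
    (hcΔ : ContinuousOn Δ (Set.Icc (-Real.pi) Real.pi))
    (hpf : ∀ θ ∈ Set.Icc (-Real.pi) Real.pi, (f θ).PosDef)
    (hΔ : ∀ θ ∈ Set.Icc (-Real.pi) Real.pi, (Δ θ).IsHermitian) :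
    ∃ C > (0 : ℝ), ∃ ε₀ > (0 : ℝ), ∀ ε : ℝ, 0 < ε → ε < ε₀ →
      (∀ θ ∈ Set.Icc (-Real.pi) Real.pi, (f θ + (ε : ℂ) • Δ θ).PosDef) ∧
      |D1 f (fun θ => f θ + (ε : ℂ) • Δ θ) -
          ε ^ 2 * ((1 / (2 * Real.pi)) * ∫ θ in (-Real.pi)..Real.pi,
            (frob (minvsqrt (f θ) * Δ θ * minvsqrt (f θ))) ^ 2)|
        ≤ C * ε ^ 3 := by
  have hπ : (0:ℝ) < Real.pi := Real.pi_pos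
  have hle : -Real.pi ≤ Real.pi := by linarith
  have huIcc : Set.uIcc (-Real.pi) Real.pi = Set.Icc (-Real.pi) Real.pi := Set.uIcc_of_le hle
  obtain ⟨ε₁, hε₁, hpos⟩ := exists_eps_posdef f Δ hcf hcΔ hpf hΔ
  set Iθ := Set.Icc (-Real.pi) Real.pi with hIθ
  set s : Set (ℝ × ℝ) := Iθ ×ˢ Set.Icc (0:ℝ) ε₁ with hsdef
  have hs : IsCompact s := isCompact_Icc.prod isCompact_Icc
  have hf1 : ContinuousOn (fun p : ℝ × ℝ => f p.1) s :=
    hcf.comp continuous_fst.continuousOn (fun p hp => hp.1)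
  have hΔ1 : ContinuousOn (fun p : ℝ × ℝ => Δ p.1) s :=
    hcΔ.comp continuous_fst.continuousOn (fun p hp => hp.1)
  have hFc : ContinuousOn (fun p : ℝ × ℝ => f p.1 + ((p.2 : ℝ) : ℂ) • Δ p.1) s :=
    hf1.add (((Complex.continuous_ofReal.comp continuous_snd).continuousOn).smul hΔ1)
  have hFinv : ContinuousOn (fun p : ℝ × ℝ => (f p.1 + ((p.2 : ℝ) : ℂ) • Δ p.1)⁻¹) s :=
    continuousOn_matrix_inv hFc fun p hp =>
      (Matrix.isUnit_iff_isUnit_det _).mp (hpos p.2 hp.2 p.1 hp.1).isUnit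
  have hfinv : ContinuousOn (fun p : ℝ × ℝ => (f p.1)⁻¹) s :=
    continuousOn_matrix_inv hf1 fun p hp =>
      (Matrix.isUnit_iff_isUnit_det _).mp (hpf p.1 hp.1).isUnit
  set ρ : ℝ × ℝ → ℝ := fun p =>
    ((f p.1)⁻¹ * Δ p.1 * ((f p.1)⁻¹ * Δ p.1) *
      ((f p.1 + ((p.2 : ℝ) : ℂ) • Δ p.1)⁻¹ * Δ p.1)).trace.re with hρdef
  have hρc : ContinuousOn ρ s :=
    Complex.continuous_re.comp_continuousOn
      ((continuous_id.matrix_trace).comp_continuousOn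
        (((hfinv.mul hΔ1).mul (hfinv.mul hΔ1)).mul (hFinv.mul hΔ1)))
  obtain ⟨C₀, hC₀⟩ := hs.exists_bound_of_continuousOn hρc
  have hsne : ((-Real.pi, 0) : ℝ × ℝ) ∈ s :=
    ⟨Set.mem_Icc.mpr ⟨le_rfl, hle⟩, Set.mem_Icc.mpr ⟨le_rfl, hε₁.le⟩⟩
  have hC₀0 : 0 ≤ C₀ := le_trans (norm_nonneg _) (hC₀ _ hsne)
  refine ⟨C₀ + 1, by linarith, ε₁, hε₁, fun ε hε0 hεlt => ?_⟩
  have hε01 : ε ∈ Set.Icc (0:ℝ) ε₁ := ⟨hε0.le, hεlt.le⟩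
  refine ⟨fun θ hθ => hpos ε hε01 θ hθ, ?_⟩
  -- notation
  set t : ℝ → ℝ := fun θ => ((f θ)⁻¹ * Δ θ * ((f θ)⁻¹ * Δ θ)).trace.re with htdef
  set φ : ℝ → ℝ := fun θ =>
    ((f θ + (ε : ℂ) • Δ θ)⁻¹ * f θ + (f θ)⁻¹ * (f θ + (ε : ℂ) • Δ θ)
      - (2 : ℂ) • 1).trace.re with hφdef
  have hFθ : ContinuousOn (fun θ => f θ + (ε : ℂ) • Δ θ) Iθ :=
    hcf.add (hcΔ.const_smul (ε : ℂ))
  have hFθinv : ContinuousOn (fun θ => (f θ + (ε : ℂ) • Δ θ)⁻¹) Iθ :=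
    continuousOn_matrix_inv hFθ fun θ hθ =>
      (Matrix.isUnit_iff_isUnit_det _).mp (hpos ε hε01 θ hθ).isUnit
  have hfθinv : ContinuousOn (fun θ => (f θ)⁻¹) Iθ :=
    continuousOn_matrix_inv hcf fun θ hθ =>
      (Matrix.isUnit_iff_isUnit_det _).mp (hpf θ hθ).isUnit
  have hφc : ContinuousOn φ Iθ :=
    Complex.continuous_re.comp_continuousOn
      ((continuous_id.matrix_trace).comp_continuousOn
        (((hFθinv.mul hcf).add (hfθinv.mul hFθ)).sub continuousOn_const))
  have htc : ContinuousOn t Iθ :=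
    Complex.continuous_re.comp_continuousOn
      ((continuous_id.matrix_trace).comp_continuousOn
        ((hfθinv.mul hcΔ).mul (hfθinv.mul hcΔ)))
  have hρθc : ContinuousOn (fun θ => ρ (θ, ε)) Iθ :=
    Complex.continuous_re.comp_continuousOn
      ((continuous_id.matrix_trace).comp_continuousOn
        (((hfθinv.mul hcΔ).mul (hfθinv.mul hcΔ)).mul (hFθinv.mul hcΔ)))
  have hφint : IntervalIntegrable φ MeasureTheory.volume (-Real.pi) Real.pi := by
    apply ContinuousOn.intervalIntegrable; rwa [huIcc]
  have htint : IntervalIntegrable t MeasureTheory.volume (-Real.pi) Real.pi := by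
    apply ContinuousOn.intervalIntegrable; rwa [huIcc]
  have hρint : IntervalIntegrable (fun θ => ρ (θ, ε)) MeasureTheory.volume
      (-Real.pi) Real.pi := by
    apply ContinuousOn.intervalIntegrable; rwa [huIcc]
  -- pointwise expansion
  have hpt : ∀ θ ∈ Iθ, φ θ = ε ^ 2 * t θ - ε ^ 3 * ρ (θ, ε) := by
    intro θ hθ
    exact pointwise_expand ε
      ((Matrix.isUnit_iff_isUnit_det _).mp (hpf θ hθ).isUnit)
      ((Matrix.isUnit_iff_isUnit_det _).mp (hpos ε hε01 θ hθ).isUnit)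
  -- rewrite the frobenius integral
  have hgeq : (∫ θ in (-Real.pi)..Real.pi,
        (frob (minvsqrt (f θ) * Δ θ * minvsqrt (f θ))) ^ 2)
      = ∫ θ in (-Real.pi)..Real.pi, t θ := by
    apply intervalIntegral.integral_congr
    intro θ hθ
    rw [huIcc] at hθ
    exact g_integrand_eq (hpf θ hθ) (hΔ θ hθ)
  have hD1 : D1 f (fun θ => f θ + (ε : ℂ) • Δ θ)
      = (1 / (2 * Real.pi)) * ∫ θ in (-Real.pi)..Real.pi, φ θ := rfl
  rw [hD1, hgeq]
  have hsub : (∫ θ in (-Real.pi)..Real.pi, φ θ)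
        - ε ^ 2 * ∫ θ in (-Real.pi)..Real.pi, t θ
      = ∫ θ in (-Real.pi)..Real.pi, (φ θ - ε ^ 2 * t θ) := by
    rw [intervalIntegral.integral_sub hφint (htint.const_mul _),
      intervalIntegral.integral_const_mul]
  have hbound : |∫ θ in (-Real.pi)..Real.pi, (φ θ - ε ^ 2 * t θ)|
      ≤ (C₀ * ε ^ 3) * |Real.pi - (-Real.pi)| := by
    rw [← Real.norm_eq_abs]
    apply intervalIntegral.norm_integral_le_of_norm_le_const
    intro x hx
    rw [Set.uIoc_of_le hle] at hx
    have hxI : x ∈ Iθ := ⟨hx.1.le, hx.2⟩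
    rw [hpt x hxI]
    have hρb : |ρ (x, ε)| ≤ C₀ := by
      have := hC₀ (x, ε) ⟨hxI, hε01⟩
      rwa [Real.norm_eq_abs] at this
    rw [Real.norm_eq_abs]
    calc |ε ^ 2 * t x - ε ^ 3 * ρ (x, ε) - ε ^ 2 * t x|
        = |ε ^ 3 * ρ (x, ε)| := by rw [show ε ^ 2 * t x - ε ^ 3 * ρ (x, ε) - ε ^ 2 * t x
            = -(ε ^ 3 * ρ (x, ε)) by ring, abs_neg]
      _ = ε ^ 3 * |ρ (x, ε)| := by rw [abs_mul, abs_of_pos (by positivity)]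
      _ ≤ ε ^ 3 * C₀ := by
          exact mul_le_mul_of_nonneg_left hρb (by positivity)
      _ = C₀ * ε ^ 3 := by ring
  have habs : |Real.pi - (-Real.pi)| = 2 * Real.pi := by
    rw [abs_of_pos (by linarith)]; ring
  rw [habs] at hbound
  have hfinal : |(1 / (2 * Real.pi)) * (∫ θ in (-Real.pi)..Real.pi, φ θ)
      - ε ^ 2 * ((1 / (2 * Real.pi)) * ∫ θ in (-Real.pi)..Real.pi, t θ)|
      ≤ (C₀ + 1) * ε ^ 3 := by
    have h1 : (1 / (2 * Real.pi)) * (∫ θ in (-Real.pi)..Real.pi, φ θ)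
        - ε ^ 2 * ((1 / (2 * Real.pi)) * ∫ θ in (-Real.pi)..Real.pi, t θ)
        = (1 / (2 * Real.pi)) * ((∫ θ in (-Real.pi)..Real.pi, φ θ)
          - ε ^ 2 * ∫ θ in (-Real.pi)..Real.pi, t θ) := by ring
    rw [h1, hsub, abs_mul, abs_of_pos (show (0:ℝ) < 1 / (2 * Real.pi) by positivity)]
    calc (1 / (2 * Real.pi)) * |∫ θ in (-Real.pi)..Real.pi, (φ θ - ε ^ 2 * t θ)|
        ≤ (1 / (2 * Real.pi)) * ((C₀ * ε ^ 3) * (2 * Real.pi)) := by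
          exact mul_le_mul_of_nonneg_left hbound (by positivity)
      _ = C₀ * ε ^ 3 := by field_simp
      _ ≤ (C₀ + 1) * ε ^ 3 := by nlinarith
  exact hfinal
end
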